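/- Every well-founded abstract argumentation framework has at most one complete extension: if S and T are both complete extensions of a well-founded AF, then S = T. -/

import Mathlib

/-- A set of arguments `S` attacks an argument `α` if some `β ∈ S` attacks `α`. -/
def attacks {A : Type*} (R : A → A → Prop) (S : Set A) (α : A) : Prop :=
  ∃ β ∈ S, R β α

/-- A set of arguments `S` is conflict-free if no argument in `S` is attacked by `S`. -/
def conflictFree {A : Type*} (R : A → A → Prop) (S : Set A) : Prop :=
  ∀ β ∈ S, ¬ attacks R S β

/-- An argument `α` is acceptable w.r.t. `S` if every attacker of `α` is attacked by `S`. -/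
def acceptable {A : Type*} (R : A → A → Prop) (α : A) (S : Set A) : Prop :=
  ∀ β, R β α → attacks R S β

/-- A set `S` is admissible if it is conflict-free and every argument in `S`
is acceptable with respect to `S`. -/
def admissible {A : Type*} (R : A → A → Prop) (S : Set A) : Prop :=
  conflictFree R S ∧ ∀ α ∈ S, acceptable R α S

/-- A set `S` is a complete extension if it is admissible and every argument
acceptable with respect to `S` belongs to `S`. -/
def completeExt {A : Type*} (R : A → A → Prop) (S : Set A) : Prop :=
  admissible R S ∧ ∀ α, acceptable R α S → α ∈ S

/-- An AF is well-founded if there is no infinite sequence `α₀, α₁, …`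
with `(α_{i+1}, α_i) ∈ R` for all `i`. -/
def wellFoundedAF {A : Type*} (R : A → A → Prop) : Prop :=
  ¬ ∃ f : ℕ → A, ∀ i : ℕ, R (f (i + 1)) (f i)

/-- Every well-founded abstract argumentation framework has at most one
complete extension. -/
theorem wellFounded_complete_extension_unique {A : Type*} (R : A → A → Prop)
    (hwf : wellFoundedAF R) (S T : Set A)
    (hS : completeExt R S) (hT : completeExt R T) : S = T := by
  have hWF : WellFounded R := by
    by_contra h
    obtain ⟨a, ha⟩ : ∃ a, ¬ Acc R a := by
      by_contra h'
      push_neg at h'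
      exact h ⟨h'⟩
    choose g hg1 hg2 using
      fun (x : {x : A // ¬ Acc R x}) => exists_not_acc_lt_of_not_acc x.2
    let f : ℕ → {x : A // ¬ Acc R x} :=
      fun n => Nat.recAux ⟨a, ha⟩ (fun _ p => ⟨g p, hg1 p⟩) n
    exact hwf ⟨fun n => (f n).1, fun n => hg2 (f n)⟩
  have hWFt : WellFounded (Relation.TransGen R) := hWF.transGen
  have key : ∀ α, α ∈ S ↔ α ∈ T := by
    intro α
    induction α using hWFt.induction with
    | _ α ih =>
      constructor
      · intro hαS
        apply hT.2
        intro β hβα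
        obtain ⟨γ, hγS, hγβ⟩ := hS.1.2 α hαS β hβα
        exact ⟨γ, (ih γ (Relation.TransGen.head hγβ (Relation.TransGen.single hβα))).1 hγS, hγβ⟩
      · intro hαT
        apply hS.2
        intro β hβα
        obtain ⟨γ, hγT, hγβ⟩ := hT.1.2 α hαT β hβα
        exact ⟨γ, (ih γ (Relation.TransGen.head hγβ (Relation.TransGen.single hβα))).2 hγT, hγβ⟩
  ext α
  exact key α
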